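/- Suppose X'X + Δ'Δ = D, where D is a p×p diagonal matrix with diagonal entries d₁, …, d_p. Fix φ ∈ ℝ^p and let u = X'Y + Δ'Δφ with components u₁, …, u_p. Then for every β ∈ ℝ^p, ‖Y − Xβ‖² + ‖Δφ − Δβ‖² = Σ_{j=1}^p (d_j β_j² − 2 u_j β_j) + ‖Y‖² + ‖Δφ‖². In particular, minimizing β ↦ ‖Y − Xβ‖² + ‖Δφ − Δβ‖² + P(β) over a product set Θ = Π_j Θ_j with a separable penalty P(β) = Σ_j P_j(β_j) is equivalent to the p one-dimensional problems of minimizing β_j ↦ d_j β_j² − 2 u_j β_j + P_j(β_j) over Θ_j. -/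

import Mathlib

open Matrix

/-- Matrix–vector multiplication viewed as a map between Euclidean spaces. -/
noncomputable def mulVecE {n p : ℕ} (X : Matrix (Fin n) (Fin p) ℝ)
    (β : EuclideanSpace ℝ (Fin p)) : EuclideanSpace ℝ (Fin n) :=
  (WithLp.equiv 2 (Fin n → ℝ)).symm (X.mulVec ((WithLp.equiv 2 (Fin p → ℝ)) β))

lemma norm_sq_eucl {k : ℕ} (x : EuclideanSpace ℝ (Fin k)) : ‖x‖ ^ 2 = ∑ i, (x i) ^ 2 := by
  rw [EuclideanSpace.norm_eq, Real.sq_sqrt (by positivity)]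
  simp [sq_abs]

lemma quad_term {q p : ℕ} (A : Matrix (Fin q) (Fin p) ℝ) (β : Fin p → ℝ) :
    ∑ i, (A.mulVec β i) ^ 2 = β ⬝ᵥ (Aᵀ * A).mulVec β := by
  rw [← mulVec_mulVec, dotProduct_mulVec, vecMul_transpose]
  simp [dotProduct, sq, mul_comm]

lemma cross_term {q p : ℕ} (A : Matrix (Fin q) (Fin p) ℝ) (y : Fin q → ℝ) (β : Fin p → ℝ) :
    ∑ i, y i * A.mulVec β i = (Aᵀ.mulVec y) ⬝ᵥ β := by
  rw [mulVec_transpose, ← dotProduct_mulVec]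
  rfl

lemma expand_sq {q p : ℕ} (A : Matrix (Fin q) (Fin p) ℝ) (y : Fin q → ℝ) (β : Fin p → ℝ) :
    ∑ i, (y i - A.mulVec β i) ^ 2
      = ∑ i, (y i) ^ 2 - 2 * ((Aᵀ.mulVec y) ⬝ᵥ β) + β ⬝ᵥ (Aᵀ * A).mulVec β := by
  have e : ∀ i, (y i - A.mulVec β i) ^ 2
      = (y i) ^ 2 - 2 * (y i * A.mulVec β i) + (A.mulVec β i) ^ 2 := fun i => by ring
  rw [Finset.sum_congr rfl (fun i _ => e i)]
  rw [Finset.sum_add_distrib, Finset.sum_sub_distrib, ← Finset.mul_sum, cross_term,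
    quad_term]

theorem stmt13 {n m p : ℕ} (X : Matrix (Fin n) (Fin p) ℝ)
    (Y : EuclideanSpace ℝ (Fin n)) (Δ : Matrix (Fin m) (Fin p) ℝ)
    (ds : Fin p → ℝ)
    (hdiag : Xᵀ * X + Δᵀ * Δ = Matrix.diagonal ds)
    (φ : EuclideanSpace ℝ (Fin p)) (u : Fin p → ℝ)
    (hu : ∀ j, u j = (∑ i, X i j * Y i) + ∑ i, (Δᵀ * Δ) j i * φ i) :
    (∀ β : EuclideanSpace ℝ (Fin p),
      ‖Y - mulVecE X β‖ ^ 2 + ‖mulVecE Δ φ - mulVecE Δ β‖ ^ 2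
        = (∑ j, (ds j * (β j) ^ 2 - 2 * u j * β j)) + ‖Y‖ ^ 2 + ‖mulVecE Δ φ‖ ^ 2) ∧
    (∀ (Θj : Fin p → Set ℝ) (Pj : Fin p → ℝ → ℝ)
        (βstar : EuclideanSpace ℝ (Fin p)), (∀ j, βstar j ∈ Θj j) →
      ((∀ β : EuclideanSpace ℝ (Fin p), (∀ j, β j ∈ Θj j) →
          ‖Y - mulVecE X βstar‖ ^ 2 + ‖mulVecE Δ φ - mulVecE Δ βstar‖ ^ 2
            + ∑ j, Pj j (βstar j)
          ≤ ‖Y - mulVecE X β‖ ^ 2 + ‖mulVecE Δ φ - mulVecE Δ β‖ ^ 2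
            + ∑ j, Pj j (β j)) ↔
        (∀ j, ∀ b ∈ Θj j,
          ds j * (βstar j) ^ 2 - 2 * u j * βstar j + Pj j (βstar j)
            ≤ ds j * b ^ 2 - 2 * u j * b + Pj j b))) := by
  -- u as a vector
  have huv : ∀ j, u j = (Xᵀ.mulVec (fun i => Y i)) j + ((Δᵀ * Δ).mulVec (fun i => φ i)) j := by
    intro j
    rw [hu j]
    rfl
  have key : ∀ β : Fin p → ℝ,
      (∑ i, ((Y : Fin n → ℝ) i - X.mulVec β i) ^ 2)
        + ∑ i, (Δ.mulVec (fun i => φ i) i - Δ.mulVec β i) ^ 2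
      = (∑ j, (ds j * (β j) ^ 2 - 2 * u j * β j))
          + ∑ i, ((Y : Fin n → ℝ) i) ^ 2 + ∑ i, (Δ.mulVec (fun i => φ i) i) ^ 2 := by
    intro β
    rw [expand_sq, expand_sq]
    have hq : β ⬝ᵥ (Xᵀ * X).mulVec β + β ⬝ᵥ (Δᵀ * Δ).mulVec β
        = ∑ j, ds j * (β j) ^ 2 := by
      rw [← dotProduct_add, ← add_mulVec, hdiag]
      simp only [dotProduct, mulVec_diagonal]
      exact Finset.sum_congr rfl fun j _ => by ring
    have hc : (Xᵀ.mulVec (fun i => (Y : Fin n → ℝ) i)) ⬝ᵥ β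
        + (Δᵀ.mulVec (Δ.mulVec (fun i => φ i))) ⬝ᵥ β = ∑ j, u j * β j := by
      rw [mulVec_mulVec, ← add_dotProduct]
      simp only [dotProduct, Pi.add_apply]
      exact Finset.sum_congr rfl fun j _ => by rw [huv j]
    rw [Finset.sum_sub_distrib]
    rw [show (∑ j, ds j * β j ^ 2) - ∑ j, 2 * u j * β j
        = (β ⬝ᵥ (Xᵀ * X).mulVec β + β ⬝ᵥ (Δᵀ * Δ).mulVec β)
          - 2 * ((Xᵀ.mulVec (fun i => (Y : Fin n → ℝ) i)) ⬝ᵥ β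
            + (Δᵀ.mulVec (Δ.mulVec (fun i => φ i))) ⬝ᵥ β) from by
      rw [hq, hc, Finset.mul_sum]
      congr 1
      exact Finset.sum_congr rfl fun j _ => by ring]
    ring
  have part1 : ∀ β : EuclideanSpace ℝ (Fin p),
      ‖Y - mulVecE X β‖ ^ 2 + ‖mulVecE Δ φ - mulVecE Δ β‖ ^ 2
        = (∑ j, (ds j * (β j) ^ 2 - 2 * u j * β j)) + ‖Y‖ ^ 2 + ‖mulVecE Δ φ‖ ^ 2 := by
    intro β
    rw [norm_sq_eucl, norm_sq_eucl, norm_sq_eucl, norm_sq_eucl]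
    exact key (fun j => β j)
  refine ⟨part1, ?_⟩
  intro Θj Pj βstar hβs
  set C : ℝ := ‖Y‖ ^ 2 + ‖mulVecE Δ φ‖ ^ 2 with hC
  have hre : ∀ β : EuclideanSpace ℝ (Fin p),
      ‖Y - mulVecE X β‖ ^ 2 + ‖mulVecE Δ φ - mulVecE Δ β‖ ^ 2 + ∑ j, Pj j (β j)
        = (∑ j, (ds j * (β j) ^ 2 - 2 * u j * β j + Pj j (β j))) + C := by
    intro β
    rw [part1 β, Finset.sum_add_distrib]
    ring
  constructor
  · intro h j b hb
    set b0 : Fin p → ℝ := fun k => βstar k with hb0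
    set β' : EuclideanSpace ℝ (Fin p) :=
      (WithLp.equiv 2 (Fin p → ℝ)).symm (Function.update b0 j b) with hβ'
    have hβ'app : ∀ k, β' k = Function.update b0 j b k := fun k => rfl
    have hmem : ∀ k, β' k ∈ Θj k := by
      intro k
      rw [hβ'app, Function.update_apply]
      rcases eq_or_ne k j with rfl | hne
      · simpa using hb
      · simpa [hne] using hβs k
    have hle := h β' hmem
    rw [hre, hre] at hle
    have hle2 := (add_le_add_iff_right C).mp hle
    set g : Fin p → ℝ → ℝ := fun k x => ds k * x ^ 2 - 2 * u k * x + Pj k x with hg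
    have hsplit : ∀ f : Fin p → ℝ, ∑ k, g k (f k)
        = g j (f j) + ∑ k ∈ Finset.univ.erase j, g k (f k) :=
      fun f => (Finset.add_sum_erase _ _ (Finset.mem_univ j)).symm
    have heq : ∑ k ∈ Finset.univ.erase j, g k (β' k)
        = ∑ k ∈ Finset.univ.erase j, g k (βstar k) := by
      refine Finset.sum_congr rfl fun k hk => ?_
      rw [hβ'app, Function.update_of_ne (Finset.ne_of_mem_erase hk)]
    have : g j (βstar j) ≤ g j (β' j) := by
      have h1 := hsplit (fun k => βstar k)
      have h2 := hsplit (fun k => β' k)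
      simp only at h1 h2
      rw [h1, h2, heq] at hle2
      linarith
    rw [hβ'app, Function.update_self] at this
    exact this
  · intro h β hβ
    rw [hre, hre]
    apply add_le_add_left
    exact Finset.sum_le_sum fun j _ => h j (β j) (hβ j)
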